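/- Let g_max > 0 and let f_k, f_τ : [0, g_max] → ℝ both be strictly convex on [0, g_max], strictly increasing, continuous, with f_k(0) = f_τ(0) = 0, f_τ(g) ≤ f_k(g) for all g ∈ [0, g_max], f_τ(g_max) < f_k(g_max), and suppose f_k has finite left derivative at g_max. Let c_1, c_2 > 0. Then there exists a positive integer N_2, depending only on f_k, f_τ, g_max, c_1 and c_2, such that for every integer N ≥ N_2 and every nonnegative random variable Z satisfying E[1/(1+Z)] ≥ c_1/N and E[1/(1+Z)²] ≤ c_2/N², the following holds for all g ∈ [0, g_max]: E[log(1 + f_k(g_max)/(1+Z))] − E[log(1 + f_τ(g_max)/(1+Z))] ≥ E[log(1 + f_k(g)/(1+Z))] − (g/g_max) · E[log(1 + f_τ(g_max)/(1+Z))]. -/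

import Mathlib

open MeasureTheory

private lemma aux_log_ub (x : ℝ) (hx : 0 ≤ x) : Real.log (1 + x) ≤ x := by
  have := Real.log_le_sub_one_of_pos (x := 1 + x) (by linarith)
  linarith

private lemma aux_log_lb (x : ℝ) (hx : 0 ≤ x) : x - x ^ 2 ≤ Real.log (1 + x) := by
  have hpos : (0:ℝ) < 1 + x := by linarith
  have h1 : Real.log (1 + x)⁻¹ ≤ (1 + x)⁻¹ - 1 :=
    Real.log_le_sub_one_of_pos (inv_pos.2 hpos)
  rw [Real.log_inv] at h1
  have h3 : x - x ^ 2 ≤ 1 - (1 + x)⁻¹ := by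
    have : (1 + x)⁻¹ ≤ 1 - x + x ^ 2 := by
      rw [inv_le_iff_one_le_mul₀ hpos]
      nlinarith
    linarith
  linarith

private lemma aux_diff (A b y : ℝ) (hy : 0 ≤ y) (hb : 0 ≤ b) (hbA : b ≤ A) :
    (A - b) * y - A * (A - b) * y ^ 2
      ≤ Real.log (1 + A * y) - Real.log (1 + b * y) := by
  have hd : (0:ℝ) < 1 + b * y := by nlinarith
  set x : ℝ := (A - b) * y / (1 + b * y) with hxdef
  have hx0 : 0 ≤ x := by
    rw [hxdef]
    exact div_nonneg (mul_nonneg (by linarith) hy) hd.le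
  have hsplit : 1 + A * y = (1 + x) * (1 + b * y) := by
    rw [hxdef, add_mul, one_mul, div_mul_cancel₀ _ (ne_of_gt hd)]; ring
  have hlog : Real.log (1 + A * y) = Real.log (1 + x) + Real.log (1 + b * y) := by
    rw [hsplit, Real.log_mul (by nlinarith) (ne_of_gt hd)]
  have hlb := aux_log_lb x hx0
  have hxle : x ≤ (A - b) * y := by
    rw [hxdef]
    exact div_le_self (by nlinarith) (by nlinarith)
  have hxge : (A - b) * y - (A - b) * b * y ^ 2 ≤ x := by
    rw [hxdef, le_div_iff₀ hd]
    have h9 : 0 ≤ (A - b) * (b ^ 2 * y ^ 3) := mul_nonneg (by linarith) (by positivity)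
    nlinarith [h9]
  have hx2 : x ^ 2 ≤ ((A - b) * y) ^ 2 := by nlinarith
  have hkey : (A - b) * y - A * (A - b) * y ^ 2 ≤ x - x ^ 2 := by nlinarith
  rw [hlog]
  linarith

set_option maxHeartbeats 1600000 in
/-- second family of dual feasibility conditions at large `N`: For
`f_k, f_τ : [0, g_max] → ℝ` strictly convex, strictly increasing, continuous,
vanishing at `0`, with `f_τ ≤ f_k` pointwise, `f_τ(g_max) < f_k(g_max)`, `f_k`
having finite left derivative `L` at `g_max`, and constants `c₁, c₂ > 0`, there is
`N₂` (depending only on `f_k, f_τ, g_max, c₁, c₂`) such that for all `N ≥ N₂` and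
every nonnegative random variable `Z` with `E[(1+Z)⁻¹] ≥ c₁/N` and
`E[(1+Z)⁻²] ≤ c₂/N²`, for all `g ∈ [0, g_max]`:
`E[log(1 + f_k(g_max)/(1+Z))] - E[log(1 + f_τ(g_max)/(1+Z))]
  ≥ E[log(1 + f_k(g)/(1+Z))] - (g/g_max) E[log(1 + f_τ(g_max)/(1+Z))]`. -/
theorem dual_feasibility_above_threshold
    (gmax : ℝ) (hgmax : 0 < gmax) (fk fτ : ℝ → ℝ) (L : ℝ)
    (hkconv : StrictConvexOn ℝ (Set.Icc 0 gmax) fk)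
    (hτconv : StrictConvexOn ℝ (Set.Icc 0 gmax) fτ)
    (hkmono : StrictMonoOn fk (Set.Icc 0 gmax))
    (hτmono : StrictMonoOn fτ (Set.Icc 0 gmax))
    (hkcont : ContinuousOn fk (Set.Icc 0 gmax))
    (hτcont : ContinuousOn fτ (Set.Icc 0 gmax))
    (hk0 : fk 0 = 0) (hτ0 : fτ 0 = 0)
    (hle : ∀ g ∈ Set.Icc 0 gmax, fτ g ≤ fk g)
    (hlt : fτ gmax < fk gmax)
    (hL : Filter.Tendsto (fun g => (fk gmax - fk g) / (gmax - g))
      (nhdsWithin gmax (Set.Iio gmax)) (nhds L))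
    (c₁ c₂ : ℝ) (hc₁ : 0 < c₁) (hc₂ : 0 < c₂) :
    ∃ N₂ : ℕ, 0 < N₂ ∧
      ∀ N : ℕ, N₂ ≤ N →
      ∀ (Ω : Type) [MeasurableSpace Ω] (P : Measure Ω) [IsProbabilityMeasure P]
        (Z : Ω → ℝ), Measurable Z → (∀ᵐ ω ∂P, 0 ≤ Z ω) →
        c₁ / (N : ℝ) ≤ ∫ ω, (1 + Z ω)⁻¹ ∂P →
        ∫ ω, ((1 + Z ω) ^ 2)⁻¹ ∂P ≤ c₂ / (N : ℝ) ^ 2 →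
        ∀ g ∈ Set.Icc 0 gmax,
          (∫ ω, Real.log (1 + fk g / (1 + Z ω)) ∂P)
              - (g / gmax) * ∫ ω, Real.log (1 + fτ gmax / (1 + Z ω)) ∂P
            ≤ (∫ ω, Real.log (1 + fk gmax / (1 + Z ω)) ∂P)
              - ∫ ω, Real.log (1 + fτ gmax / (1 + Z ω)) ∂P := by
  set A := fk gmax with hA
  set B := fτ gmax with hB
  have hgm : gmax ∈ Set.Icc 0 gmax := ⟨le_of_lt hgmax, le_refl _⟩
  have h0m : (0:ℝ) ∈ Set.Icc 0 gmax := ⟨le_refl _, le_of_lt hgmax⟩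
  have hA0 : 0 < A := by
    have := hkmono h0m hgm hgmax; rw [hk0] at this; linarith
  have hB0 : 0 < B := by
    have := hτmono h0m hgm hgmax; rw [hτ0] at this; linarith
  have hBA : B < A := hlt
  clear_value A B
  refine ⟨max 1 ⌈A ^ 2 * c₂ / (c₁ * (A - B))⌉₊,
    lt_of_lt_of_le one_pos (le_max_left _ _), ?_⟩
  intro N hN Ω _ P _ Z hZm hZ0 hEY hEY2 g hg
  have hN1 : (1:ℕ) ≤ N := le_trans (le_max_left _ _) hN
  have hNpos : (0:ℝ) < (N:ℝ) := by exact_mod_cast hN1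
  have hNge : A ^ 2 * c₂ / (c₁ * (A - B)) ≤ (N:ℝ) := by
    calc A ^ 2 * c₂ / (c₁ * (A - B)) ≤ (⌈A ^ 2 * c₂ / (c₁ * (A - B))⌉₊ : ℝ) :=
          Nat.le_ceil _
    _ ≤ (N:ℝ) := by exact_mod_cast le_trans (le_max_right _ _) hN
  -- basic a.e. facts
  have hY : ∀ᵐ ω ∂P, 0 < 1 + Z ω ∧ (1 + Z ω)⁻¹ ≤ 1 := by
    filter_upwards [hZ0] with ω hω
    refine ⟨by linarith, ?_⟩
    rw [inv_le_one_iff₀]; right; linarith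
  have hYm : Measurable fun ω => (1 + Z ω)⁻¹ := (measurable_const.add hZm).inv
  have hYint : Integrable (fun ω => (1 + Z ω)⁻¹) P := by
    refine Integrable.mono' (integrable_const 1) hYm.aestronglyMeasurable ?_
    filter_upwards [hY] with ω hω
    rw [Real.norm_eq_abs, abs_of_nonneg (le_of_lt (inv_pos.2 hω.1))]; exact hω.2
  have hY2int : Integrable (fun ω => ((1 + Z ω)⁻¹) ^ 2) P := by
    refine Integrable.mono' (integrable_const 1)
      ((hYm.pow_const 2).aestronglyMeasurable) ?_
    filter_upwards [hY] with ω hω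
    have h1 : 0 ≤ (1 + Z ω)⁻¹ := le_of_lt (inv_pos.2 hω.1)
    rw [Real.norm_eq_abs, abs_of_nonneg (by positivity)]
    nlinarith
  have hEY2' : ∫ ω, ((1 + Z ω)⁻¹) ^ 2 ∂P ≤ c₂ / (N:ℝ) ^ 2 := by
    simpa [inv_pow] using hEY2
  -- integrability of log terms
  have hlogint : ∀ a : ℝ, 0 ≤ a →
      Integrable (fun ω => Real.log (1 + a / (1 + Z ω))) P := by
    intro a ha
    have hm : Measurable fun ω => Real.log (1 + a / (1 + Z ω)) :=
      Real.measurable_log.comp (measurable_const.add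
        (measurable_const.div (measurable_const.add hZm)))
    refine Integrable.mono' (integrable_const a) hm.aestronglyMeasurable ?_
    filter_upwards [hY] with ω hω
    have hy0 : 0 ≤ (1 + Z ω)⁻¹ := le_of_lt (inv_pos.2 hω.1)
    have hx0 : 0 ≤ a / (1 + Z ω) := by
      rw [div_eq_mul_inv]; positivity
    have hx1 : a / (1 + Z ω) ≤ a := by
      rw [div_eq_mul_inv]
      nlinarith
    rw [Real.norm_eq_abs, abs_of_nonneg (Real.log_nonneg (by linarith))]
    have := aux_log_ub (a / (1 + Z ω)) hx0
    linarith
  -- parameters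
  set b := fk g with hbdef
  set t := g / gmax with htdef
  have hg0 := hg.1
  have hg1 := hg.2
  have ht0 : 0 ≤ t := by positivity
  have ht1 : t ≤ 1 := by
    rw [htdef, div_le_one hgmax]; exact hg1
  have hb0 : 0 ≤ b := by
    rcases eq_or_lt_of_le hg0 with h | h
    · rw [hbdef, ← h, hk0]
    · have := hkmono h0m hg h
      rw [hk0] at this; linarith
  have hbA : b ≤ A := by
    rcases eq_or_lt_of_le hg1 with h | h
    · rw [hbdef, h, ← hA]
    · rw [hbdef, hA]
      exact le_of_lt (hkmono hg hgm h)
  -- convexity: b ≤ t * A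
  have hconv : b ≤ t * A := by
    rw [hbdef, hA]
    have hcomb := hkconv.convexOn.2 h0m hgm (by linarith : (0:ℝ) ≤ 1 - t) ht0
      (by ring : (1 - t) + t = 1)
    have hgeq : (1 - t) • (0:ℝ) + t • gmax = g := by
      simp [htdef, smul_eq_mul]
      field_simp
    rw [hgeq] at hcomb
    simpa [hk0, smul_eq_mul] using hcomb
  have hΔlb : (1 - t) * A ≤ A - b := by nlinarith
  clear_value b t
  -- step 1 : lower bound on I(A) - I(b)
  have hpt : ∀ᵐ ω ∂P,
      (A - b) * (1 + Z ω)⁻¹ - A * (A - b) * ((1 + Z ω)⁻¹) ^ 2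
        ≤ Real.log (1 + A / (1 + Z ω)) - Real.log (1 + b / (1 + Z ω)) := by
    filter_upwards [hY] with ω hω
    have hy0 : 0 ≤ (1 + Z ω)⁻¹ := le_of_lt (inv_pos.2 hω.1)
    have := aux_diff A b ((1 + Z ω)⁻¹) hy0 hb0 hbA
    rw [div_eq_mul_inv, div_eq_mul_inv]
    exact this
  have hint1 : Integrable
      (fun ω => (A - b) * (1 + Z ω)⁻¹ - A * (A - b) * ((1 + Z ω)⁻¹) ^ 2) P :=
    (hYint.const_mul _).sub (hY2int.const_mul _)
  have hint2 : Integrable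
      (fun ω => Real.log (1 + A / (1 + Z ω)) - Real.log (1 + b / (1 + Z ω))) P :=
    (hlogint A hA0.le).sub (hlogint b hb0)
  have step1 := integral_mono_ae hint1 hint2 hpt
  rw [integral_sub (hYint.const_mul _) (hY2int.const_mul _),
    integral_sub (hlogint A hA0.le) (hlogint b hb0),
    integral_const_mul, integral_const_mul] at step1
  -- step ub : I(B) ≤ B * EY
  have hptB : ∀ᵐ ω ∂P,
      Real.log (1 + B / (1 + Z ω)) ≤ B * (1 + Z ω)⁻¹ := by
    filter_upwards [hY] with ω hω
    have hy0 : 0 ≤ (1 + Z ω)⁻¹ := le_of_lt (inv_pos.2 hω.1)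
    have := aux_log_ub (B * (1 + Z ω)⁻¹) (by positivity)
    rw [div_eq_mul_inv]
    exact this
  have stepB := integral_mono_ae (hlogint B hB0.le) (hYint.const_mul B) hptB
  rw [integral_const_mul] at stepB
  -- notation for integrals
  set EY := ∫ ω, (1 + Z ω)⁻¹ ∂P with hEYdef
  set EY2 := ∫ ω, ((1 + Z ω)⁻¹) ^ 2 ∂P with hEY2def
  have hEYpos : 0 < EY := lt_of_lt_of_le (by positivity) hEY
  clear_value EY EY2
  -- arithmetic combining the moment bounds
  have hcc : 0 < c₁ * (A - B) := mul_pos hc₁ (by linarith)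
  have h1 : A ^ 2 * c₂ ≤ c₁ * (A - B) * (N:ℝ) := by
    rw [div_le_iff₀ hcc] at hNge
    linarith
  have h6 : B / A * EY ≤ EY - A * (c₂ / (N:ℝ) ^ 2) := by
    have h2 : A * (c₂ / (N:ℝ) ^ 2) ≤ (A - B) / A * (c₁ / (N:ℝ)) := by
      have e1 : (A - B) / A * (c₁ / (N:ℝ)) - A * (c₂ / (N:ℝ) ^ 2)
          = (c₁ * (A - B) * (N:ℝ) - A ^ 2 * c₂) / (A * (N:ℝ) ^ 2) := by
        field_simp
      have e2 : 0 ≤ (c₁ * (A - B) * (N:ℝ) - A ^ 2 * c₂) / (A * (N:ℝ) ^ 2) :=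
        div_nonneg (by linarith) (mul_nonneg hA0.le (by positivity))
      rw [← e1] at e2
      linarith
    have h3 : (A - B) / A * (c₁ / (N:ℝ)) ≤ (A - B) / A * EY :=
      mul_le_mul_of_nonneg_left hEY (div_nonneg (by linarith) hA0.le)
    have hid : (A - B) / A + B / A = 1 := by
      rw [← add_div, show A - B + B = A by ring, div_self (ne_of_gt hA0)]
    have hid2 : (A - B) / A * EY + B / A * EY = EY := by
      rw [← add_mul, hid, one_mul]
    linarith
  have hΔ0 : 0 ≤ A - b := by linarith
  have k1 : A * (A - b) * EY2 ≤ A * (A - b) * (c₂ / (N:ℝ) ^ 2) :=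
    mul_le_mul_of_nonneg_left hEY2' (mul_nonneg hA0.le hΔ0)
  have k2 : (A - b) * (B / A * EY) ≤ (A - b) * (EY - A * (c₂ / (N:ℝ) ^ 2)) :=
    mul_le_mul_of_nonneg_left h6 hΔ0
  have k3 : (1 - t) * A * (B / A * EY) ≤ (A - b) * (B / A * EY) :=
    mul_le_mul_of_nonneg_right hΔlb
      (mul_nonneg (div_nonneg hB0.le hA0.le) hEYpos.le)
  have k4 : (1 - t) * A * (B / A * EY) = (1 - t) * (B * EY) := by
    rw [show (1 - t) * A * (B / A * EY) = (1 - t) * ((B / A * A) * EY) by ring,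
      div_mul_cancel₀ B (ne_of_gt hA0)]
  have key : (1 - t) * (B * EY) ≤ (A - b) * EY - A * (A - b) * EY2 := by
    have e : (A - b) * (EY - A * (c₂ / (N:ℝ) ^ 2))
        = (A - b) * EY - A * (A - b) * (c₂ / (N:ℝ) ^ 2) := by ring
    linarith [k1, k2, k3, k4, e]
  -- conclude
  have hBub : (1 - t) * (∫ ω, Real.log (1 + B / (1 + Z ω)) ∂P)
      ≤ (1 - t) * (B * EY) :=
    mul_le_mul_of_nonneg_left stepB (by linarith)
  linarith
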